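/- arXiv:2401.00807 — 8 statements merged into one kernel-verified Lean document; each statement's English description precedes it below -/
import Mathlib

section
/- Let n and k be positive integers such that k divides n(n+1)/2, and let P = [p_1, …, p_k] be an ascending partition of n of size k. If P is equitable, then for every j with 1 ≤ j ≤ k it holds that Σ_{i=1}^{p_1+⋯+p_j} (n − i + 1) − j·s^{n,k} ≥ 0. -/
/-- `s^{n,k} = n(n+1)/(2k)`. -/
def sNK (n k : ℕ) : ℕ := n * (n + 1) / (2 * k)

/-- `slack_j(P) = Σ_{i=1}^{p_1+⋯+p_j} (n − i + 1) − j·s^{n,k}`. -/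
def slack (n k : ℕ) (p : ℕ → ℕ) (j : ℕ) : ℤ :=
  (∑ i ∈ Finset.Icc 1 (∑ t ∈ Finset.Icc 1 j, p t), ((n : ℤ) - (i : ℤ) + 1))
    - (j : ℤ) * (sNK n k : ℤ)

/-- `p` (on indices `1,…,k`) is an ascending partition of `n` of size `k`. -/
def IsAscPartition (n k : ℕ) (p : ℕ → ℕ) : Prop :=
  (∀ i, 1 ≤ i → i ≤ k → 1 ≤ p i) ∧
  (∀ i j, 1 ≤ i → i ≤ j → j ≤ k → p i ≤ p j) ∧
  ∑ i ∈ Finset.Icc 1 k, p i = n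

/-- `p` is equitable: `{1,…,n}` partitions into sets `A_1,…,A_k` with `|A_i| = p_i`
and each element sum equal to `s^{n,k}`. -/
def Equitable (n k : ℕ) (p : ℕ → ℕ) : Prop :=
  ∃ A : ℕ → Finset ℕ,
    (∀ i j, 1 ≤ i → i < j → j ≤ k → Disjoint (A i) (A j)) ∧
    (Finset.Icc 1 k).biUnion A = Finset.Icc 1 n ∧
    (∀ i, 1 ≤ i → i ≤ k → (A i).card = p i) ∧
    (∀ i, 1 ≤ i → i ≤ k → ∑ x ∈ A i, x = sNK n k)

lemma key_sum_le (n : ℕ) : ∀ B : Finset ℕ, B ⊆ Finset.Icc 1 n →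
    (∑ x ∈ B, (x : ℤ)) ≤ ∑ i ∈ Finset.Icc 1 B.card, ((n : ℤ) + 1 - i) := by
  intro B
  induction B using Finset.strongInductionOn with
  | _ B ih =>
    intro hB
    rcases B.eq_empty_or_nonempty with rfl | hne
    · simp
    · set a := B.min' hne with ha
      have haB : a ∈ B := B.min'_mem hne
      have hsub : B.erase a ⊆ Finset.Icc 1 n := (Finset.erase_subset _ _).trans hB
      have hcard : (B.erase a).card = B.card - 1 := Finset.card_erase_of_mem haB
      have hpos : 1 ≤ B.card := Finset.card_pos.mpr hne
      have hBsub : B ⊆ Finset.Icc a n := by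
        intro x hx
        exact Finset.mem_Icc.mpr ⟨B.min'_le x hx, (Finset.mem_Icc.mp (hB hx)).2⟩
      have han : a ≤ n := (Finset.mem_Icc.mp (hB haB)).2
      have hcard_le : B.card ≤ n + 1 - a := by
        have := Finset.card_le_card hBsub
        rwa [Nat.card_Icc] at this
      have hale : (a : ℤ) ≤ (n : ℤ) + 1 - B.card := by omega
      have hIH := ih (B.erase a) (Finset.erase_ssubset haB) hsub
      rw [hcard] at hIH
      have hsplit : (∑ x ∈ B, (x : ℤ)) = (∑ x ∈ B.erase a, (x : ℤ)) + a := by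
        rw [Finset.sum_erase_add _ _ haB]
      have hIcc : (∑ i ∈ Finset.Icc 1 B.card, ((n : ℤ) + 1 - i))
          = (∑ i ∈ Finset.Icc 1 (B.card - 1), ((n : ℤ) + 1 - i)) + ((n : ℤ) + 1 - B.card) := by
        have h1 : B.card = (B.card - 1) + 1 := by omega
        rw [h1, Finset.sum_Icc_succ_top (by omega)]
        have h2 : B.card - 1 + 1 - 1 = B.card - 1 := by omega
        rw [h2]
      rw [hsplit, hIcc]
      linarith

theorem statement0 (n k : ℕ) (hn : 0 < n) (hk : 0 < k)
    (hdvd : k ∣ n * (n + 1) / 2) (p : ℕ → ℕ)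
    (hP : IsAscPartition n k p) (hEq : Equitable n k p) :
    ∀ j, 1 ≤ j → j ≤ k → 0 ≤ slack n k p j := by
  obtain ⟨A, hdisj, hcover, hcardA, hsumA⟩ := hEq
  intro j hj1 hjk
  set B := (Finset.Icc 1 j).biUnion A with hBdef
  have hd : ∀ i ∈ Finset.Icc 1 j, ∀ i' ∈ Finset.Icc 1 j, i ≠ i' → Disjoint (A i) (A i') := by
    intro i hi i' hi' hne
    rw [Finset.mem_Icc] at hi hi'
    rcases lt_or_gt_of_ne hne with h | h
    · exact hdisj i i' hi.1 h (hi'.2.trans hjk)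
    · exact (hdisj i' i hi'.1 h (hi.2.trans hjk)).symm
  have hBcard : B.card = ∑ t ∈ Finset.Icc 1 j, p t := by
    rw [hBdef, Finset.card_biUnion hd]
    refine Finset.sum_congr rfl fun i hi => ?_
    rw [Finset.mem_Icc] at hi
    exact hcardA i hi.1 (hi.2.trans hjk)
  have hBsum : (∑ x ∈ B, (x : ℤ)) = (j : ℤ) * (sNK n k : ℤ) := by
    rw [hBdef, Finset.sum_biUnion (fun i hi i' hi' hne => hd i hi i' hi' hne)]
    have h1 : ∀ i ∈ Finset.Icc 1 j, (∑ x ∈ A i, (x : ℤ)) = (sNK n k : ℤ) := by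
      intro i hi
      rw [Finset.mem_Icc] at hi
      have := hsumA i hi.1 (hi.2.trans hjk)
      rw [← this, Nat.cast_sum]
    rw [Finset.sum_congr rfl h1, Finset.sum_const, Nat.card_Icc]
    simp [mul_comm]
  have hBsub : B ⊆ Finset.Icc 1 n := by
    rw [← hcover]
    exact Finset.biUnion_subset_biUnion_of_subset_left A (Finset.Icc_subset_Icc_right hjk)
  have hkey := key_sum_le n B hBsub
  rw [hBcard, hBsum] at hkey
  unfold slack
  have : ∀ i ∈ Finset.Icc 1 (∑ t ∈ Finset.Icc 1 j, p t),
      ((n : ℤ) - (i : ℤ) + 1) = ((n : ℤ) + 1 - i) := fun i _ => by ring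
  rw [Finset.sum_congr rfl this]
  linarith
end

section
/- Each of the three ascending partitions [2^9, 3^2, 5, 10], [2^9, 3^2, 6, 9], and [2^9, 3^2, 7, 8] of n = 39 into k = 13 parts satisfies the slack condition (slack_j(P) ≥ 0 for all 1 ≤ j ≤ 12, where s^{39,13} = 60) but is not equitable: the set {1, …, 39} cannot be partitioned into subsets of those sizes all having element sum 60. -/
/-- The partition `[2^9, 3^2, 5, 10]` of 39 into 13 parts. -/
def pA : ℕ → ℕ := fun i => if i ≤ 9 then 2 else if i ≤ 11 then 3 else if i ≤ 12 then 5 else 10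

/-- The partition `[2^9, 3^2, 6, 9]` of 39 into 13 parts. -/
def pB : ℕ → ℕ := fun i => if i ≤ 9 then 2 else if i ≤ 11 then 3 else if i ≤ 12 then 6 else 9

/-- The partition `[2^9, 3^2, 7, 8]` of 39 into 13 parts. -/
def pC : ℕ → ℕ := fun i => if i ≤ 9 then 2 else if i ≤ 11 then 3 else if i ≤ 12 then 7 else 8

lemma notEq (p : ℕ → ℕ) (h2 : ∀ i, 1 ≤ i → i ≤ 9 → p i = 2)
    (h10 : p 10 = 3) (h11 : p 11 = 3) : ¬ Equitable 39 13 p := by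
  rintro ⟨A, hdisj, hcover, hcard, hsum⟩
  have hs : sNK 39 13 = 60 := by decide
  rw [hs] at hsum
  have hsub : ∀ i, 1 ≤ i → i ≤ 13 → A i ⊆ Finset.Icc 1 39 := by
    intro i h1 h13 x hx
    rw [← hcover]
    exact Finset.mem_biUnion.2 ⟨i, Finset.mem_Icc.2 ⟨h1, h13⟩, hx⟩
  -- each 2-set is inside Icc 21 39
  have hpair : ∀ i, 1 ≤ i → i ≤ 9 → A i ⊆ Finset.Icc 21 39 := by
    intro i h1 h9
    have hc : (A i).card = 2 := by rw [hcard i h1 (by omega)]; exact h2 i h1 h9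
    obtain ⟨a, b, hab, hA⟩ := Finset.card_eq_two.1 hc
    have hsumi : a + b = 60 := by
      have := hsum i h1 (by omega); rw [hA, Finset.sum_pair hab] at this; exact this
    have ha : a ∈ Finset.Icc 1 39 := hsub i h1 (by omega) (by rw [hA]; simp)
    have hb : b ∈ Finset.Icc 1 39 := hsub i h1 (by omega) (by rw [hA]; simp)
    rw [Finset.mem_Icc] at ha hb
    intro x hx
    rw [hA, Finset.mem_insert, Finset.mem_singleton] at hx
    rw [Finset.mem_Icc]
    rcases hx with rfl | rfl <;> omega
  have hdisj' : ∀ i j, 1 ≤ i → 1 ≤ j → i ≤ 13 → j ≤ 13 → i ≠ j → Disjoint (A i) (A j) := by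
    intro i j hi hj hi13 hj13 hne
    rcases lt_or_gt_of_ne hne with h | h
    · exact hdisj i j hi h hj13
    · exact (hdisj j i hj h hi13).symm
  set U : Finset ℕ := (Finset.Icc 1 9).biUnion A with hUdef
  have hUcard : U.card = 18 := by
    rw [hUdef, Finset.card_biUnion]
    · have : ∀ i ∈ Finset.Icc 1 9, (A i).card = 2 := by
        intro i hi; rw [Finset.mem_Icc] at hi
        rw [hcard i hi.1 (by omega)]; exact h2 i hi.1 hi.2
      rw [Finset.sum_congr rfl this]; simp
    · intro i hi j hj hne
      rw [Finset.mem_coe, Finset.mem_Icc] at hi hj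
      exact hdisj' i j hi.1 hj.1 (by omega) (by omega) hne
  have hUsub : U ⊆ Finset.Icc 21 39 := by
    intro x hx
    rw [hUdef, Finset.mem_biUnion] at hx
    obtain ⟨i, hi, hxi⟩ := hx
    rw [Finset.mem_Icc] at hi
    exact hpair i hi.1 hi.2 hxi
  have hdU : ∀ m, m = 10 ∨ m = 11 → Disjoint (A m) U := by
    intro m hm
    rw [hUdef]
    apply Finset.disjoint_biUnion_right _ _ _ |>.2
    intro i hi
    rw [Finset.mem_Icc] at hi
    exact hdisj' m i (by omega) hi.1 (by omega) (by omega) (by omega)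
  have hd1011 : Disjoint (A 10) (A 11) := hdisj 10 11 (by omega) (by omega) (by omega)
  set B := A 10 ∩ Finset.Icc 21 39 with hB
  set C := A 11 ∩ Finset.Icc 21 39 with hC
  have hkey : B.card + C.card + U.card ≤ 19 := by
    have hd1 : Disjoint B C :=
      (hd1011.mono (Finset.inter_subset_left) (Finset.inter_subset_left))
    have hd2 : Disjoint (B ∪ C) U := by
      rw [Finset.disjoint_union_left]
      exact ⟨(hdU 10 (Or.inl rfl)).mono_left Finset.inter_subset_left,
             (hdU 11 (Or.inr rfl)).mono_left Finset.inter_subset_left⟩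
    have hsubT : B ∪ C ∪ U ⊆ Finset.Icc 21 39 := by
      apply Finset.union_subset (Finset.union_subset _ _) hUsub
      · exact hB ▸ Finset.inter_subset_right
      · exact hC ▸ Finset.inter_subset_right
    have := Finset.card_le_card hsubT
    rw [Finset.card_union_of_disjoint hd2, Finset.card_union_of_disjoint hd1] at this
    simpa using this
  have hBC : B = ∅ ∨ C = ∅ := by
    rw [hUcard] at hkey
    rcases Nat.eq_zero_or_pos B.card with h | h
    · exact Or.inl (Finset.card_eq_zero.1 h)
    · exact Or.inr (Finset.card_eq_zero.1 (by omega))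
  -- now show a 3-set inside Icc 1 20 can't sum to 60
  have small : ∀ m, m = 10 ∨ m = 11 → ¬ (A m ∩ Finset.Icc 21 39 = ∅) := by
    intro m hm hempty
    have hcm : (A m).card = 3 := by
      rcases hm with rfl | rfl
      · rw [hcard 10 (by omega) (by omega)]; exact h10
      · rw [hcard 11 (by omega) (by omega)]; exact h11
    obtain ⟨a, b, c, hab, hac, hbc, hA⟩ := Finset.card_eq_three.1 hcm
    have hsm : a + b + c = 60 := by
      have := hsum m (by omega) (by rcases hm with rfl | rfl <;> omega)
      rw [hA] at this
      rw [Finset.sum_insert (by simp [hab, hac]), Finset.sum_insert (by simp [hbc]),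
        Finset.sum_singleton] at this
      omega
    have hle : ∀ x ∈ A m, x ≤ 20 := by
      intro x hx
      have hx39 : x ∈ Finset.Icc 1 39 :=
        hsub m (by omega) (by rcases hm with rfl | rfl <;> omega) hx
      rw [Finset.mem_Icc] at hx39
      by_contra hgt
      have : x ∈ A m ∩ Finset.Icc 21 39 :=
        Finset.mem_inter.2 ⟨hx, Finset.mem_Icc.2 ⟨by omega, hx39.2⟩⟩
      rw [hempty] at this
      exact absurd this (Finset.notMem_empty x)
    have ha := hle a (by rw [hA]; simp)
    have hb := hle b (by rw [hA]; simp)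
    have hc := hle c (by rw [hA]; simp)
    omega
  rcases hBC with h | h
  · exact small 10 (Or.inl rfl) h
  · exact small 11 (Or.inr rfl) h

theorem statement1 :
    sNK 39 13 = 60 ∧
    (IsAscPartition 39 13 pA ∧ (∀ j, 1 ≤ j → j ≤ 12 → 0 ≤ slack 39 13 pA j) ∧
      ¬ Equitable 39 13 pA) ∧
    (IsAscPartition 39 13 pB ∧ (∀ j, 1 ≤ j → j ≤ 12 → 0 ≤ slack 39 13 pB j) ∧
      ¬ Equitable 39 13 pB) ∧
    (IsAscPartition 39 13 pC ∧ (∀ j, 1 ≤ j → j ≤ 12 → 0 ≤ slack 39 13 pC j) ∧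
      ¬ Equitable 39 13 pC) := by
  refine ⟨by decide, ⟨?_, ?_, notEq pA (by decide) (by decide) (by decide)⟩,
    ⟨?_, ?_, notEq pB (by decide) (by decide) (by decide)⟩,
    ⟨?_, ?_, notEq pC (by decide) (by decide) (by decide)⟩⟩
  · refine ⟨fun i h1 h2 => ?_, fun i j h1 h2 h3 => ?_, by decide⟩
    · simp only [pA]; split_ifs <;> omega
    · simp only [pA]; split_ifs <;> omega
  · intro j h1 h2; interval_cases j <;> decide
  · refine ⟨fun i h1 h2 => ?_, fun i j h1 h2 h3 => ?_, by decide⟩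
    · simp only [pB]; split_ifs <;> omega
    · simp only [pB]; split_ifs <;> omega
  · intro j h1 h2; interval_cases j <;> decide
  · refine ⟨fun i h1 h2 => ?_, fun i j h1 h2 h3 => ?_, by decide⟩
    · simp only [pC]; split_ifs <;> omega
    · simp only [pC]; split_ifs <;> omega
  · intro j h1 h2; interval_cases j <;> decide
end

section
/- The ascending partition P = [2^{25}, 3^2, 4, 6, 14] of n = 80 into k = 30 parts satisfies the slack condition (slack_j(P) ≥ 0 for all 1 ≤ j ≤ 29, where s^{80,30} = 108) but is not equitable: the set {1, …, 80} cannot be partitioned into 25 subsets of size 2, two subsets of size 3, and one subset each of sizes 4, 6 and 14, all having element sum 108. -/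
/-- The partition `[2^25, 3^2, 4, 6, 14]` of 80 into 30 parts. -/
def pD : ℕ → ℕ := fun i =>
  if i ≤ 25 then 2 else if i ≤ 27 then 3 else if i ≤ 28 then 4 else if i ≤ 29 then 6 else 14



private lemma lb : ∀ n (F : Finset ℕ), F.card = n → (∀ x ∈ F, 1 ≤ x) →
    n * (n + 1) ≤ 2 * ∑ x ∈ F, x := by
  intro n
  induction n with
  | zero => simp
  | succ m ih =>
    intro F hc h
    have hne : F.Nonempty := Finset.card_pos.mp (by omega)
    set M := F.max' hne with hM
    have hMmem : M ∈ F := F.max'_mem hne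
    have hsub : F ⊆ Finset.Icc 1 M := by
      intro x hx
      exact Finset.mem_Icc.mpr ⟨h x hx, F.le_max' x hx⟩
    have hcard : F.card ≤ M := by
      have := Finset.card_le_card hsub
      simpa using this
    have hce : (F.erase M).card = m := by
      rw [Finset.card_erase_of_mem hMmem, hc]; omega
    have hih := ih (F.erase M) hce (fun x hx => h x (Finset.mem_of_mem_erase hx))
    have hsum : ∑ x ∈ F, x = M + ∑ x ∈ F.erase M, x :=
      (Finset.add_sum_erase F id hMmem).symm
    have hMm : m + 1 ≤ M := by omega
    nlinarith [hih, hsum, hMm]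

private lemma ub (F : Finset ℕ) (h : F ⊆ Finset.Icc 1 27) :
    2 * ∑ x ∈ F, x + (27 - F.card) * (28 - F.card) ≤ 756 := by
  have hc : F.card ≤ 27 := by
    have := Finset.card_le_card h
    simpa using this
  have hsum : ∑ x ∈ (Finset.Icc 1 27) \ F, x + ∑ x ∈ F, x = 378 := by
    rw [Finset.sum_sdiff h]; decide
  have hcc : ((Finset.Icc 1 27) \ F).card = 27 - F.card := by
    rw [Finset.card_sdiff_of_subset h]; simp
  have := lb (27 - F.card) ((Finset.Icc 1 27) \ F) hcc
    (fun x hx => (Finset.mem_Icc.mp (Finset.mem_sdiff.mp hx).1).1)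
  have h28 : 28 - F.card = (27 - F.card) + 1 := by omega
  rw [h28]
  omega

private lemma notEq_s2 : ¬ Equitable 80 30 pD := by
  rintro ⟨A, hdisj, hcover, hcard, hsum⟩
  have hsNK : sNK 80 30 = 108 := by decide
  rw [hsNK] at hsum
  -- symmetric disjointness
  have hdisj' : ∀ i j, 1 ≤ i → 1 ≤ j → i ≤ 30 → j ≤ 30 → i ≠ j → Disjoint (A i) (A j) := by
    intro i j h1 h2 h3 h4 hne
    rcases Nat.lt_or_ge i j with h | h
    · exact hdisj i j h1 h h4
    · exact (hdisj j i h2 (by omega) h3).symm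
  have hsub : ∀ i, 1 ≤ i → i ≤ 30 → A i ⊆ Finset.Icc 1 80 := by
    intro i h1 h2
    rw [← hcover]
    exact Finset.subset_biUnion_of_mem A (Finset.mem_Icc.mpr ⟨h1, h2⟩)
  -- pair sets: elements are ≥ 28 and ≠ 54
  have key1 : ∀ i x, 1 ≤ i → i ≤ 25 → x ∈ A i → 28 ≤ x ∧ x ≠ 54 := by
    intro i x h1 h2 hx
    have hc2 : (A i).card = 2 := by
      have := hcard i h1 (by omega)
      simpa [pD, h2] using this
    obtain ⟨u, v, huv, hA⟩ := Finset.card_eq_two.mp hc2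
    have hs : u + v = 108 := by
      have := hsum i h1 (by omega)
      rw [hA] at this
      rwa [Finset.sum_pair huv] at this
    have hu80 : u ≤ 80 := (Finset.mem_Icc.mp (hsub i h1 (by omega) (hA ▸ Finset.mem_insert_self u {v}))).2
    have hv80 : v ≤ 80 := (Finset.mem_Icc.mp (hsub i h1 (by omega)
      (hA ▸ Finset.mem_insert_of_mem (Finset.mem_singleton_self v)))).2
    rw [hA] at hx
    rcases Finset.mem_insert.mp hx with rfl | hx
    · constructor <;> omega
    · rw [Finset.mem_singleton] at hx
      subst hx
      constructor <;> omega
  set T : Finset ℕ := (Finset.Icc 26 30).biUnion A with hT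
  have hAT : ∀ i, 26 ≤ i → i ≤ 30 → A i ⊆ T := by
    intro i h1 h2
    exact Finset.subset_biUnion_of_mem A (Finset.mem_Icc.mpr ⟨h1, h2⟩)
  have hTsub : T ⊆ Finset.Icc 1 80 := by
    intro x hx
    obtain ⟨i, hi, hxi⟩ := Finset.mem_biUnion.mp hx
    rw [Finset.mem_Icc] at hi
    exact hsub i (by omega) hi.2 hxi
  have memT : ∀ x, x ∈ Finset.Icc 1 80 → (x ≤ 27 ∨ x = 54) → x ∈ T := by
    intro x hx hx2
    rw [← hcover] at hx
    obtain ⟨i, hi, hxi⟩ := Finset.mem_biUnion.mp hx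
    rw [Finset.mem_Icc] at hi
    rcases Nat.lt_or_ge 25 i with h | h
    · exact Finset.mem_biUnion.mpr ⟨i, Finset.mem_Icc.mpr ⟨by omega, hi.2⟩, hxi⟩
    · obtain ⟨h28, h54⟩ := key1 i x hi.1 h hxi
      omega
  have hpd : ∀ i ∈ Finset.Icc 26 30, ∀ j ∈ Finset.Icc 26 30, i ≠ j → Disjoint (A i) (A j) := by
    intro i hi j hj hne
    rw [Finset.mem_Icc] at hi hj
    exact hdisj' i j (by omega) (by omega) hi.2 hj.2 hne
  have hTcard : T.card = 30 := by
    rw [hT, Finset.card_biUnion hpd]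
    have : ∑ i ∈ Finset.Icc 26 30, (A i).card = ∑ i ∈ Finset.Icc 26 30, pD i :=
      Finset.sum_congr rfl (fun i hi => by
        rw [Finset.mem_Icc] at hi
        exact hcard i (by omega) hi.2)
    rw [this]
    decide
  have hTsum : ∑ x ∈ T, x = 540 := by
    rw [hT, Finset.sum_biUnion hpd]
    have : ∑ i ∈ Finset.Icc 26 30, ∑ x ∈ A i, x = ∑ i ∈ Finset.Icc 26 30, 108 :=
      Finset.sum_congr rfl (fun i hi => by
        rw [Finset.mem_Icc] at hi
        exact hsum i (by omega) hi.2)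
    rw [this]
    decide
  set Small : Finset ℕ := insert 54 (Finset.Icc 1 27) with hSm
  have hSmT : Small ⊆ T := by
    intro x hx
    rw [hSm, Finset.mem_insert, Finset.mem_Icc] at hx
    apply memT x
    · rw [Finset.mem_Icc]; omega
    · omega
  set R : Finset ℕ := T \ Small with hR
  have hRcard : R.card = 2 := by
    rw [hR, Finset.card_sdiff_of_subset hSmT, hTcard]
    decide
  have hRsum : ∑ x ∈ R, x = 108 := by
    have h1 : ∑ x ∈ R, x + ∑ x ∈ Small, x = ∑ x ∈ T, x := by
      rw [hR]
      exact Finset.sum_sdiff (f := fun x => x) hSmT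
    have hss : ∑ x ∈ Small, x = 432 := by rw [hSm]; decide
    omega
  have hRprop : ∀ x ∈ R, 28 ≤ x ∧ x ≤ 80 ∧ x ≠ 54 := by
    intro x hx
    rw [hR, Finset.mem_sdiff] at hx
    have h80 := Finset.mem_Icc.mp (hTsub hx.1)
    have := hx.2
    rw [hSm, Finset.mem_insert, Finset.mem_Icc] at this
    push_neg at this
    omega
  set L : Finset ℕ := insert 54 R with hL
  have h54R : 54 ∉ R := fun h => (hRprop 54 h).2.2 rfl
  have hLcard : L.card = 3 := by rw [hL, Finset.card_insert_of_notMem h54R, hRcard]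
  have hLT : L ⊆ T := by
    intro x hx
    rw [hL, Finset.mem_insert] at hx
    rcases hx with rfl | hx
    · exact hSmT (by rw [hSm]; exact Finset.mem_insert_self _ _)
    · rw [hR, Finset.mem_sdiff] at hx; exact hx.1
  have hsmall : ∀ x ∈ T, x ∉ L → x ≤ 27 := by
    intro x hx hxL
    by_contra h
    push_neg at h
    rw [hL, Finset.mem_insert] at hxL
    push_neg at hxL
    apply hxL.2
    rw [hR, Finset.mem_sdiff]
    refine ⟨hx, ?_⟩
    rw [hSm, Finset.mem_insert, Finset.mem_Icc]
    push_neg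
    exact ⟨hxL.1, fun _ => by omega⟩
  -- For i ∈ {26,27,28}: A i \ L ⊆ Icc 1 27
  have hdiffsub : ∀ i, 26 ≤ i → i ≤ 30 → (A i \ L) ⊆ Finset.Icc 1 27 := by
    intro i h1 h2 x hx
    rw [Finset.mem_sdiff] at hx
    have hxT := hAT i h1 h2 hx.1
    have h1x := (Finset.mem_Icc.mp (hTsub hxT)).1
    exact Finset.mem_Icc.mpr ⟨h1x, hsmall x hxT hx.2⟩
  -- each of A26, A27, A28 meets L
  have hmeets : ∀ i, 26 ≤ i → i ≤ 28 → (A i ∩ L).Nonempty := by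
    intro i h1 h2
    by_contra h
    rw [Finset.not_nonempty_iff_eq_empty] at h
    have hAL : A i \ L = A i := by
      rw [Finset.sdiff_eq_self_iff_disjoint, Finset.disjoint_left]
      intro x hx hxL
      have : x ∈ A i ∩ L := Finset.mem_inter.mpr ⟨hx, hxL⟩
      simp [h] at this
    have hsubI : A i ⊆ Finset.Icc 1 27 := by
      rw [← hAL]; exact hdiffsub i h1 (by omega)
    have hub := ub (A i) hsubI
    have hci : (A i).card = pD i := hcard i (by omega) (by omega)
    have hsi : ∑ x ∈ A i, x = 108 := hsum i (by omega) (by omega)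
    have hpdi : pD i ≤ 4 := by unfold pD; split_ifs <;> omega
    have hpdi2 : 3 ≤ pD i := by unfold pD; split_ifs <;> omega
    rw [hsi, hci] at hub
    interval_cases h : pD i <;> omega
  -- cardinalities of intersections sum to ≤ 3
  have hc26 := hmeets 26 (by omega) (by omega)
  have hc27 := hmeets 27 (by omega) (by omega)
  have hc28 := hmeets 28 (by omega) (by omega)
  have hunion : (A 26 ∩ L) ∪ (A 27 ∩ L) ∪ (A 28 ∩ L) ⊆ L := by
    intro x hx
    rcases Finset.mem_union.mp hx with h | h
    · rcases Finset.mem_union.mp h with h | h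
      · exact (Finset.mem_inter.mp h).2
      · exact (Finset.mem_inter.mp h).2
    · exact (Finset.mem_inter.mp h).2
  have hdisj2627 : Disjoint (A 26 ∩ L) (A 27 ∩ L) :=
    (hdisj' 26 27 (by omega) (by omega) (by omega) (by omega) (by omega)).mono
      (Finset.inter_subset_left) (Finset.inter_subset_left)
  have hdisj2628 : Disjoint (A 26 ∩ L) (A 28 ∩ L) :=
    (hdisj' 26 28 (by omega) (by omega) (by omega) (by omega) (by omega)).mono
      (Finset.inter_subset_left) (Finset.inter_subset_left)
  have hdisj2728 : Disjoint (A 27 ∩ L) (A 28 ∩ L) :=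
    (hdisj' 27 28 (by omega) (by omega) (by omega) (by omega) (by omega)).mono
      (Finset.inter_subset_left) (Finset.inter_subset_left)
  have hcardsum : (A 26 ∩ L).card + (A 27 ∩ L).card + (A 28 ∩ L).card ≤ 3 := by
    have h1 : ((A 26 ∩ L) ∪ (A 27 ∩ L) ∪ (A 28 ∩ L)).card ≤ 3 := by
      rw [← hLcard]; exact Finset.card_le_card hunion
    rw [Finset.card_union_of_disjoint (by
        rw [Finset.disjoint_union_left]; exact ⟨hdisj2628, hdisj2728⟩),
      Finset.card_union_of_disjoint hdisj2627] at h1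
    exact h1
  have hc26' : (A 26 ∩ L).card = 1 := by
    have := Finset.card_pos.mpr hc26
    have := Finset.card_pos.mpr hc27
    have := Finset.card_pos.mpr hc28
    omega
  have hc27' : (A 27 ∩ L).card = 1 := by
    have := Finset.card_pos.mpr hc26
    have := Finset.card_pos.mpr hc27
    have := Finset.card_pos.mpr hc28
    omega
  -- extract the two large elements
  obtain ⟨l1, hl1⟩ := Finset.card_eq_one.mp hc26'
  obtain ⟨l2, hl2⟩ := Finset.card_eq_one.mp hc27'
  have key2 : ∀ i l, 26 ≤ i → i ≤ 27 → A i ∩ L = {l} → 55 ≤ l ∧ l ∈ R := by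
    intro i l h1 h2 hil
    have hsplit : ∑ x ∈ A i ∩ L, x + ∑ x ∈ A i \ L, x = ∑ x ∈ A i, x :=
      Finset.sum_inter_add_sum_sdiff (A i) L (fun x => x)
    have hsl : ∑ x ∈ A i ∩ L, x = l := by rw [hil, Finset.sum_singleton]
    have hsi : ∑ x ∈ A i, x = 108 := hsum i (by omega) (by omega)
    have hcd : (A i \ L).card = 2 := by
      have h3 : (A i).card = 3 := by
        have hci := hcard i (by omega) (by omega)
        have hp3 : pD i = 3 := by unfold pD; split_ifs <;> omega
        omega
      have h1c : (A i ∩ L).card = 1 := by rw [hil]; simp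
      have := Finset.card_inter_add_card_sdiff (A i) L
      omega
    have hub2 := ub (A i \ L) (hdiffsub i (by omega) (by omega))
    rw [hcd] at hub2
    have hl55 : 55 ≤ l := by omega
    have hlL : l ∈ L := (Finset.mem_inter.mp (hil ▸ Finset.mem_singleton_self l)).2
    rw [hL, Finset.mem_insert] at hlL
    rcases hlL with rfl | hlL
    · omega
    · exact ⟨hl55, hlL⟩
  obtain ⟨hl1_55, hl1R⟩ := key2 26 l1 (by omega) (by omega) hl1
  obtain ⟨hl2_55, hl2R⟩ := key2 27 l2 (by omega) (by omega) hl2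
  have hl12 : l1 ≠ l2 := by
    intro h
    subst h
    have : l1 ∈ A 26 ∩ L := hl1 ▸ Finset.mem_singleton_self l1
    have h2 : l1 ∈ A 27 ∩ L := hl2 ▸ Finset.mem_singleton_self l1
    exact Finset.disjoint_left.mp hdisj2627 this h2
  have hpr : ({l1, l2} : Finset ℕ) = R := by
    apply Finset.eq_of_subset_of_card_le
    · intro x hx
      rcases Finset.mem_insert.mp hx with rfl | hx
      · exact hl1R
      · rw [Finset.mem_singleton] at hx; subst hx; exact hl2R
    · rw [hRcard, Finset.card_pair hl12]
  have : l1 + l2 = 108 := by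
    rw [← hRsum, ← hpr, Finset.sum_pair hl12]
  omega

theorem statement2 :
    sNK 80 30 = 108 ∧
    IsAscPartition 80 30 pD ∧
    (∀ j, 1 ≤ j → j ≤ 29 → 0 ≤ slack 80 30 pD j) ∧
    ¬ Equitable 80 30 pD := by
  refine ⟨by decide, ⟨?_, ?_, by decide⟩, ?_, notEq_s2⟩
  · intro i h1 h2; unfold pD; split_ifs <;> omega
  · intro i j h1 h2 h3; unfold pD; split_ifs <;> omega
  · intro j h1 h2
    interval_cases j <;> decide
end

section
/- Let P = [p_1, …, p_k] be an ascending partition of n of size k with s^{n,k} = n(n+1)/(2k) an integer. If min_{1 ≤ j ≤ k−1} slack_j(P) < 0, then there is an index j < k with p_j < p_{j+1} at which this minimum is attained, i.e., slack_j(P) = min_{1 ≤ i ≤ k−1} slack_i(P). In other words, if negative, the minimum slack is attained at the end of a block that is not the last block. -/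
private lemma gauss_int (n : ℕ) : 2 * ∑ i ∈ Finset.Icc 1 n, (i : ℤ) = n * (n + 1) := by
  induction n with
  | zero => simp
  | succ m ih =>
    rw [Finset.sum_Icc_succ_top (by omega : 1 ≤ m + 1)]
    push_cast
    push_cast at ih
    ring_nf
    ring_nf at ih
    linarith

/-- slack at `j+1` minus slack at `j`. -/
private lemma slack_succ (n k : ℕ) (p : ℕ → ℕ) (j : ℕ) :
    slack n k p (j + 1) = slack n k p j +
      ((∑ i ∈ Finset.Ioc (∑ t ∈ Finset.Icc 1 j, p t)
          ((∑ t ∈ Finset.Icc 1 j, p t) + p (j + 1)), ((n : ℤ) - (i : ℤ) + 1))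
        - (sNK n k : ℤ)) := by
  have hS : ∑ t ∈ Finset.Icc 1 (j + 1), p t = (∑ t ∈ Finset.Icc 1 j, p t) + p (j + 1) := by
    rw [Finset.sum_Icc_succ_top (by omega : 1 ≤ j + 1)]
  unfold slack
  rw [hS]
  have hsplit : ∀ m q : ℕ,
      ∑ i ∈ Finset.Icc 1 (m + q), ((n : ℤ) - (i : ℤ) + 1)
        = (∑ i ∈ Finset.Icc 1 m, ((n : ℤ) - (i : ℤ) + 1))
          + ∑ i ∈ Finset.Ioc m (m + q), ((n : ℤ) - (i : ℤ) + 1) := by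
    intro m q
    rw [show Finset.Icc 1 (m + q) = Finset.Ioc 0 (m + q) by rw [← Finset.Icc_add_one_left_eq_Ioc]; rfl,
        show Finset.Icc 1 m = Finset.Ioc 0 m by rw [← Finset.Icc_add_one_left_eq_Ioc]; rfl,
        Finset.sum_Ioc_consecutive _ (Nat.zero_le m) (Nat.le_add_right m q)]
  rw [hsplit]
  push_cast
  ring

/-- shift lemma for block sums. -/
private lemma block_shift (n a q : ℕ) :
    ∑ i ∈ Finset.Ioc (a + q) (a + q + q), ((n : ℤ) - (i : ℤ) + 1)
      = (∑ i ∈ Finset.Ioc a (a + q), ((n : ℤ) - (i : ℤ) + 1)) - q * q := by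
  have hmap : Finset.Ioc (a + q) (a + q + q)
      = (Finset.Ioc a (a + q)).map (addRightEmbedding q) := by
    rw [Finset.map_add_right_Ioc]
  rw [hmap, Finset.sum_map]
  have : ∀ i ∈ Finset.Ioc a (a + q),
      ((n : ℤ) - ((addRightEmbedding q) i : ℕ) + 1)
        = ((n : ℤ) - (i : ℤ) + 1) - q := by
    intro i _
    simp [addRightEmbedding]
    push_cast
    ring
  rw [Finset.sum_congr rfl this, Finset.sum_sub_distrib, Finset.sum_const,
    Nat.card_Ioc]
  have hc : a + q - a = q := by omega
  rw [hc, nsmul_eq_mul]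

theorem statement8 (n k : ℕ) (hn : 0 < n) (hk : 0 < k)
    (hdvd : k ∣ n * (n + 1) / 2) (p : ℕ → ℕ) (hasc : IsAscPartition n k p)
    (j₀ : ℕ) (hj₀1 : 1 ≤ j₀) (hj₀k : j₀ ≤ k - 1)
    (hmin : ∀ i, 1 ≤ i → i ≤ k - 1 → slack n k p j₀ ≤ slack n k p i)
    (hneg : slack n k p j₀ < 0) :
    ∃ j, 1 ≤ j ∧ j < k ∧ p j < p (j + 1) ∧ slack n k p j = slack n k p j₀ := by
  obtain ⟨hpos, hmono, hsum⟩ := hasc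
  have hk2 : 2 ≤ k := by omega
  have hslack0 : slack n k p 0 = 0 := by simp [slack]
  have hslackk : slack n k p k = 0 := by
    have hks : k * sNK n k = n * (n + 1) / 2 := by
      unfold sNK
      rw [← Nat.div_div_eq_div_mul]
      exact Nat.mul_div_cancel' hdvd
    have h2 : 2 * (n * (n + 1) / 2) = n * (n + 1) := by
      rw [Nat.mul_div_cancel' (even_iff_two_dvd.mp (Nat.even_mul_succ_self n))]
    have hsumconst : ∑ i ∈ Finset.Icc 1 n, ((n : ℤ) - (i : ℤ) + 1)
        = n * ((n : ℤ) + 1) - ∑ i ∈ Finset.Icc 1 n, (i : ℤ) := by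
      have he : ∀ i ∈ Finset.Icc 1 n, ((n : ℤ) - (i : ℤ) + 1) = ((n : ℤ) + 1) - (i : ℤ) := by
        intro i _; ring
      rw [Finset.sum_congr rfl he, Finset.sum_sub_distrib, Finset.sum_const, Nat.card_Icc]
      have : n + 1 - 1 = n := by omega
      rw [this]
      push_cast
      ring
    have hg := gauss_int n
    unfold slack
    rw [hsum, hsumconst]
    have hcast : ((k : ℤ)) * (sNK n k : ℤ) = ((n * (n + 1) / 2 : ℕ) : ℤ) := by
      rw [← Nat.cast_mul, hks]
    rw [hcast]
    have : (2 : ℤ) * ((n * (n + 1) / 2 : ℕ) : ℤ) = (n : ℤ) * (n + 1) := by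
      rw [← Nat.cast_ofNat, ← Nat.cast_mul, h2]; push_cast; ring
    linarith
  set T : Finset ℕ := (Finset.Icc 1 (k - 1)).filter (fun j => slack n k p j = slack n k p j₀)
    with hT
  have hTne : T.Nonempty := ⟨j₀, by simp [hT, hj₀1, hj₀k]⟩
  set j := T.max' hTne with hj
  have hjT : j ∈ T := T.max'_mem hTne
  have hj1 : 1 ≤ j := by simp [hT] at hjT; omega
  have hjk1 : j ≤ k - 1 := by simp [hT] at hjT; omega
  have hjval : slack n k p j = slack n k p j₀ := by simp [hT] at hjT; exact hjT.2
  refine ⟨j, hj1, by omega, ?_, hjval⟩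
  by_contra hcon
  push_neg at hcon
  have hpeq : p j = p (j + 1) :=
    le_antisymm (hmono j (j + 1) hj1 (by omega) (by omega)) hcon
  set A := ∑ t ∈ Finset.Icc 1 (j - 1), p t with hA
  have hSj : ∑ t ∈ Finset.Icc 1 j, p t = A + p j := by
    have h := Finset.sum_Icc_succ_top (by omega : 1 ≤ (j - 1) + 1) p
    rw [show (j - 1) + 1 = j by omega] at h
    exact h
  have hd1 := slack_succ n k p (j - 1)
  have hd2 := slack_succ n k p j
  rw [show (j - 1) + 1 = j by omega] at hd1
  rw [← hA] at hd1
  rw [hSj, ← hpeq] at hd2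
  have hDj : slack n k p j - slack n k p (j - 1) ≤ 0 := by
    rcases eq_or_lt_of_le hj1 with h1 | h1
    · have e0 : j - 1 = 0 := by omega
      rw [e0, hslack0, hjval]; linarith
    · have := hmin (j - 1) (by omega) (by omega)
      rw [hjval]; linarith
  have hshift := block_shift n A (p j)
  rw [hshift] at hd2
  have hpj1 : 1 ≤ p j := hpos j hj1 (by omega)
  have hnext : slack n k p (j + 1) < slack n k p j := by
    have h1 : (1 : ℤ) ≤ (p j : ℤ) * (p j : ℤ) := by
      have : (1 : ℤ) ≤ (p j : ℤ) := by exact_mod_cast hpj1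
      nlinarith
    rw [hd2]
    linarith [hd1]
  rcases Nat.lt_or_ge (j + 1) k with hlt | hge
  · have := hmin (j + 1) (by omega) (by omega)
    rw [hjval] at hnext
    linarith
  · have heq : j + 1 = k := by omega
    rw [heq, hslackk] at hnext
    rw [hjval] at hnext
    linarith
end

section
/- Let P = [p_1, …, p_k] be an ascending partition of n of size k with s^{n,k} = n(n+1)/(2k) an integer, and set slack_0(P) = 0. If 1 ≤ j ≤ k − 1 and p_j = p_{j+1}, then slack_{j+1}(P) − slack_j(P) < slack_j(P) − slack_{j−1}(P); consequently slack_j(P) > (slack_{j−1}(P) + slack_{j+1}(P))/2, so slack_j(P) cannot be a strict minimum of the sequence of slacks. -/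
lemma twoF (n : ℕ) : ∀ M : ℕ,
    2 * (∑ i ∈ Finset.Icc 1 M, ((n : ℤ) - (i : ℤ) + 1))
      = 2 * M * (n + 1) - M * (M + 1) := by
  intro M
  induction M with
  | zero => simp
  | succ m ih =>
      rw [Finset.sum_Icc_succ_top (by omega : 1 ≤ m + 1)]
      push_cast
      push_cast at ih
      linarith

theorem statement9 (n k : ℕ) (hn : 0 < n) (hk : 0 < k)
    (hdvd : k ∣ n * (n + 1) / 2) (p : ℕ → ℕ) (hasc : IsAscPartition n k p)
    (j : ℕ) (hj1 : 1 ≤ j) (hjk : j ≤ k - 1) (hpj : p j = p (j + 1)) :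
    slack n k p (j + 1) - slack n k p j < slack n k p j - slack n k p (j - 1) ∧
    2 * slack n k p j > slack n k p (j - 1) + slack n k p (j + 1) := by
  obtain ⟨m, rfl⟩ : ∃ m, j = m + 1 := ⟨j - 1, (Nat.succ_pred_eq_of_pos hj1).symm⟩
  have hq1 : 1 ≤ p (m + 1) := hasc.1 (m + 1) (by omega) (by omega)
  set a := ∑ t ∈ Finset.Icc 1 m, p t with ha
  set q := p (m + 1) with hqdef
  have h1 : ∑ t ∈ Finset.Icc 1 (m + 1), p t = a + q := by
    rw [Finset.sum_Icc_succ_top (by omega : 1 ≤ m + 1)]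
  have h2 : ∑ t ∈ Finset.Icc 1 (m + 2), p t = a + q + q := by
    rw [Finset.sum_Icc_succ_top (by omega : 1 ≤ m + 2), h1, ← hpj]
  have e0 := twoF n a
  have e1 := twoF n (a + q)
  have e2 := twoF n (a + q + q)
  simp only [slack, h1, h2, Nat.add_sub_cancel]
  push_cast at e0 e1 e2 ⊢
  constructor <;> nlinarith [e0, e1, e2, hq1, sq_nonneg ((q:ℤ))]
end

section
/- For every even integer t ≥ 6, with n = 6t + 3, k = 2t + 1, e = (3/2)t and f = 2, there exists an ascending partition P = [p_1, …, p_k] of n of size k with p_1 = ⋯ = p_e = 2 and p_{e+1} = ⋯ = p_{e+f} = 3, such that slack_j(P) ≥ 0 for all 1 ≤ j ≤ k − 1 and P is not equitable. -/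
def myP (u i : ℕ) : ℕ :=
  if i ≤ 3*u then 2 else if i ≤ 3*u+2 then 3 else if i ≤ 4*u then 6 else 9

lemma myP_prefix (u : ℕ) (hu : 3 ≤ u) (j : ℕ) :
    ∑ i ∈ Finset.Icc 1 j, myP u i =
      if j ≤ 3*u then 2*j else if j ≤ 3*u+2 then 3*j - 3*u
      else if j ≤ 4*u then 6*j - 12*u - 6 else 12*u + 3 + 9*(j - (4*u+1)) := by
  induction j with
  | zero => simp
  | succ m ih =>
    rw [Finset.sum_Icc_succ_top (Nat.le_add_left 1 m), ih]
    simp only [myP]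
    split_ifs <;> omega

lemma gauss_sum (n : ℕ) (M : ℕ) :
    2 * ∑ i ∈ Finset.Icc 1 M, ((n:ℤ) - (i:ℤ) + 1) = M * (2*n + 1 - M) := by
  induction M with
  | zero => simp
  | succ m ih =>
    rw [Finset.sum_Icc_succ_top (Nat.le_add_left 1 m)]
    push_cast
    push_cast at ih
    linarith [ih]

lemma sNK_val (u : ℕ) : sNK (6*(u+u)+3) (2*(u+u)+1) = 18*u+6 := by
  unfold sNK
  rw [show (6*(u+u)+3) * (6*(u+u)+3+1) = (2*(2*(u+u)+1)) * (18*u+6) by ring]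
  exact Nat.mul_div_cancel_left _ (by omega)

lemma slack_nonneg (u : ℕ) (hu : 3 ≤ u) (j : ℕ) (hj1 : 1 ≤ j) (hj2 : j ≤ 2*(u+u)) :
    0 ≤ slack (6*(u+u)+3) (2*(u+u)+1) (myP u) j := by
  have hM := myP_prefix u hu j
  simp only [slack, sNK_val]
  have hj1' : (1:ℤ) ≤ (j:ℤ) := by exact_mod_cast hj1
  have hu' : (3:ℤ) ≤ (u:ℤ) := by exact_mod_cast hu
  by_cases h1 : j ≤ 3*u
  · have hMv : ∑ i ∈ Finset.Icc 1 j, myP u i = 2*j := by rw [hM]; simp [h1]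
    rw [hMv]
    have hg := gauss_sum (6*(u+u)+3) (2*j)
    have hjb : (j:ℤ) ≤ 3*(u:ℤ) := by exact_mod_cast h1
    push_cast at hg ⊢
    nlinarith [hg, mul_nonneg (by linarith : (0:ℤ) ≤ 2*(j:ℤ)) (by linarith : (0:ℤ) ≤ 6*(u:ℤ)+1-2*(j:ℤ))]
  · by_cases h2 : j ≤ 3*u+2
    · have hj' : j = 3*u+1 ∨ j = 3*u+2 := by omega
      rcases hj' with rfl | rfl
      · have hMv : ∑ i ∈ Finset.Icc 1 (3*u+1), myP u i = 6*u+3 := by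
          rw [hM]; split_ifs <;> omega
        rw [hMv]
        have hg := gauss_sum (6*(u+u)+3) (6*u+3)
        push_cast at hg ⊢
        nlinarith [hg]
      · have hMv : ∑ i ∈ Finset.Icc 1 (3*u+2), myP u i = 6*u+6 := by
          rw [hM]; split_ifs <;> omega
        rw [hMv]
        have hg := gauss_sum (6*(u+u)+3) (6*u+6)
        push_cast at hg ⊢
        nlinarith [hg]
    · have h3 : j ≤ 4*u := by omega
      have hMv : ∑ i ∈ Finset.Icc 1 j, myP u i = 6*j - 12*u - 6 := by
        rw [hM]; split_ifs <;> omega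
      rw [hMv]
      have hg := gauss_sum (6*(u+u)+3) (6*j - 12*u - 6)
      have hcast : ((6*j - 12*u - 6 : ℕ) : ℤ) = 6*(j:ℤ) - 12*(u:ℤ) - 6 := by omega
      rw [hcast] at hg
      have hjb : (j:ℤ) ≤ 4*(u:ℤ) := by exact_mod_cast h3
      have hjc : 3*(u:ℤ)+3 ≤ (j:ℤ) := by exact_mod_cast (by omega : 3*u+3 ≤ j)
      push_cast at hg ⊢
      nlinarith [hg, mul_nonneg (by linarith : (0:ℤ) ≤ (j:ℤ)-3*(u:ℤ)-2)
        (by linarith : (0:ℤ) ≤ 6*(u:ℤ) - 7 - 6*((j:ℤ)-3*(u:ℤ)-2))]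

lemma not_equitable (u : ℕ) (hu : 3 ≤ u) :
    ¬ Equitable (6*(u+u)+3) (2*(u+u)+1) (myP u) := by
  rintro ⟨A, hdisj, hcover, hcard, hsum⟩
  -- every element of any A i is in [1, 12u+3]
  have hmem : ∀ i x, 1 ≤ i → i ≤ 2*(u+u)+1 → x ∈ A i → 1 ≤ x ∧ x ≤ 6*(u+u)+3 := by
    intro i x hi1 hi2 hx
    have : x ∈ Finset.Icc 1 (6*(u+u)+3) := by
      rw [← hcover]
      exact Finset.mem_biUnion.mpr ⟨i, Finset.mem_Icc.mpr ⟨hi1, hi2⟩, hx⟩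
    exact Finset.mem_Icc.mp this
  -- small-index sets: pairs of large elements avoiding the midpoint
  have hA2 : ∀ i, 1 ≤ i → i ≤ 3*u → ∀ x ∈ A i,
      6*u+3 ≤ x ∧ x ≤ 12*u+3 ∧ x ≠ 9*u+3 := by
    intro i hi1 hi2 x hx
    have hik : i ≤ 2*(u+u)+1 := by omega
    have hc2 : (A i).card = 2 := by
      rw [hcard i hi1 hik]; simp only [myP]; split_ifs <;> omega
    obtain ⟨a, b, hab, hset⟩ := Finset.card_eq_two.mp hc2
    have hsab : a + b = 18*u+6 := by
      have := hsum i hi1 hik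
      rw [sNK_val, hset, Finset.sum_pair hab] at this
      exact this
    have ha := hmem i a hi1 hik (by rw [hset]; simp)
    have hb := hmem i b hi1 hik (by rw [hset]; simp)
    rw [hset, Finset.mem_insert, Finset.mem_singleton] at hx
    rcases hx with rfl | rfl <;> omega
  -- the union of small-index sets
  have hpd : ∀ i ∈ Finset.Icc 1 (3*u), ∀ j ∈ Finset.Icc 1 (3*u), i ≠ j →
      Disjoint (A i) (A j) := by
    intro i hi j hj hij
    rw [Finset.mem_Icc] at hi hj
    rcases lt_or_gt_of_ne hij with h | h
    · exact hdisj i j hi.1 h (by omega)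
    · exact (hdisj j i hj.1 h (by omega)).symm
  set T := (Finset.Icc 1 (3*u)).biUnion A with hT
  have hTD : T ⊆ (Finset.Icc (6*u+3) (12*u+3)).erase (9*u+3) := by
    intro x hx
    obtain ⟨i, hi, hxi⟩ := Finset.mem_biUnion.mp hx
    rw [Finset.mem_Icc] at hi
    obtain ⟨h1, h2, h3⟩ := hA2 i hi.1 hi.2 x hxi
    exact Finset.mem_erase.mpr ⟨h3, Finset.mem_Icc.mpr ⟨h1, h2⟩⟩
  have hcardT : T.card = 6*u := by
    rw [hT, Finset.card_biUnion hpd]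
    have : ∀ i ∈ Finset.Icc 1 (3*u), (A i).card = 2 := by
      intro i hi
      rw [Finset.mem_Icc] at hi
      rw [hcard i hi.1 (by omega)]; simp only [myP]; split_ifs <;> omega
    rw [Finset.sum_congr rfl this, Finset.sum_const, Nat.card_Icc, smul_eq_mul]
    omega
  have hcardD : ((Finset.Icc (6*u+3) (12*u+3)).erase (9*u+3)).card = 6*u := by
    rw [Finset.card_erase_of_mem (Finset.mem_Icc.mpr ⟨by omega, by omega⟩), Nat.card_Icc]
    omega
  have hTeq : T = (Finset.Icc (6*u+3) (12*u+3)).erase (9*u+3) :=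
    Finset.eq_of_subset_of_card_le hTD (by omega)
  -- the two 3-sets must each contain the midpoint 9u+3
  have hin : ∀ i, 3*u+1 ≤ i → i ≤ 3*u+2 → 9*u+3 ∈ A i := by
    intro i hi1 hi2
    by_contra hno
    have hik : i ≤ 2*(u+u)+1 := by omega
    have hsmall : ∀ x ∈ A i, x ≤ 6*u+2 := by
      intro x hx
      by_contra hgt
      push_neg at hgt
      have hx12 := (hmem i x (by omega) hik hx).2
      have hxm : x ≠ 9*u+3 := fun h => hno (h ▸ hx)
      have hxT : x ∈ T := by
        rw [hTeq]
        exact Finset.mem_erase.mpr ⟨hxm, Finset.mem_Icc.mpr ⟨by omega, by omega⟩⟩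
      obtain ⟨i', hi', hxi'⟩ := Finset.mem_biUnion.mp hxT
      rw [Finset.mem_Icc] at hi'
      have hd := hdisj i' i hi'.1 (by omega) hik
      exact Finset.disjoint_left.mp hd hxi' hx
    have hc3 : (A i).card = 3 := by
      rw [hcard i (by omega) hik]; simp only [myP]; split_ifs <;> omega
    obtain ⟨a, b, c, hab, hac, hbc, hset⟩ := Finset.card_eq_three.mp hc3
    have hsabc : a + b + c = 18*u+6 := by
      have := hsum i (by omega) hik
      rw [sNK_val, hset] at this
      rw [Finset.sum_insert (by simp [hab, hac]), Finset.sum_insert (by simp [hbc]),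
        Finset.sum_singleton] at this
      omega
    have ha := hsmall a (by rw [hset]; simp)
    have hb := hsmall b (by rw [hset]; simp)
    have hc := hsmall c (by rw [hset]; simp)
    omega
  have h1 := hin (3*u+1) le_rfl (by omega)
  have h2 := hin (3*u+2) (by omega) le_rfl
  have hd := hdisj (3*u+1) (3*u+2) (by omega) (by omega) (by omega)
  exact Finset.disjoint_left.mp hd h1 h2


theorem statement11 (t : ℕ) (ht : Even t) (ht6 : 6 ≤ t) (e : ℕ) (he : 2 * e = 3 * t) :
    ∃ p : ℕ → ℕ,
      IsAscPartition (6 * t + 3) (2 * t + 1) p ∧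
      (∀ i, 1 ≤ i → i ≤ e → p i = 2) ∧
      (∀ i, e + 1 ≤ i → i ≤ e + 2 → p i = 3) ∧
      (∀ j, 1 ≤ j → j ≤ 2 * t → 0 ≤ slack (6 * t + 3) (2 * t + 1) p j) ∧
      ¬ Equitable (6 * t + 3) (2 * t + 1) p := by
  obtain ⟨u, rfl⟩ := ht
  have hu : 3 ≤ u := by omega
  have he3 : e = 3*u := by omega
  subst he3
  refine ⟨myP u, ⟨?_, ?_, ?_⟩, ?_, ?_, ?_, ?_⟩
  · intro i _ _; simp only [myP]; split_ifs <;> omega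
  · intro i j _ hij _; simp only [myP]; split_ifs <;> omega
  · rw [myP_prefix u hu]; split_ifs <;> omega
  · intro i hi1 hi2; simp only [myP]; split_ifs <;> omega
  · intro i hi1 hi2; simp only [myP]; split_ifs <;> omega
  · exact fun j h1 h2 => slack_nonneg u hu j h1 h2
  · exact not_equitable u hu
end

section
/- For every even integer t ≥ 10, with n = 6t + 2, k = 2t + 1, e = (3/2)t and f = 3, there exists an ascending partition P = [p_1, …, p_k] of n of size k with p_1 = ⋯ = p_e = 2 and p_{e+1} = ⋯ = p_{e+f} = 3, such that slack_j(P) ≥ 0 for all 1 ≤ j ≤ k − 1 and P is not equitable. -/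
def st13P (u : ℕ) : ℕ → ℕ := fun i =>
  if i ≤ 3*u then 2 else if i ≤ 3*u+3 then 3 else if i ≤ 4*u then 6 else 11

lemma st13_gauss (n c : ℕ) :
    (∑ i ∈ Finset.Icc 1 c, ((n:ℤ) - (i:ℤ) + 1)) * 2 = c * (2*n + 1 - c) := by
  induction c with
  | zero => simp
  | succ m ih =>
    rw [Finset.sum_Icc_succ_top (by omega), add_mul, ih]
    push_cast
    ring

lemma st13_psum (u j : ℕ) (hj : j ≤ 4*u+1) :
    (∑ i ∈ Finset.Icc 1 j, st13P u i) =
      (if j ≤ 3*u then 2*j else if j ≤ 3*u+3 then 3*j - 3*u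
        else if j ≤ 4*u then 6*j - (12*u+9) else 12*u+2) := by
  induction j with
  | zero => simp
  | succ m ih =>
    rw [Finset.sum_Icc_succ_top (by omega), ih (by omega)]
    simp only [st13P]
    split_ifs <;> omega

theorem statement13 (t : ℕ) (ht : Even t) (ht10 : 10 ≤ t) (e : ℕ) (he : 2 * e = 3 * t) :
    ∃ p : ℕ → ℕ,
      IsAscPartition (6 * t + 2) (2 * t + 1) p ∧
      (∀ i, 1 ≤ i → i ≤ e → p i = 2) ∧
      (∀ i, e + 1 ≤ i → i ≤ e + 3 → p i = 3) ∧
      (∀ j, 1 ≤ j → j ≤ 2 * t → 0 ≤ slack (6 * t + 2) (2 * t + 1) p j) ∧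
      ¬ Equitable (6 * t + 2) (2 * t + 1) p := by
  obtain ⟨u, hu⟩ := ht
  have ht2 : t = 2 * u := by omega
  subst ht2
  have he3 : e = 3 * u := by omega
  subst he3
  have hu5 : 5 ≤ u := by omega
  have hs : sNK (6*(2*u)+2) (2*(2*u)+1) = 18*u+3 := by
    unfold sNK
    have h : (6*(2*u)+2) * ((6*(2*u)+2) + 1) = (2*(2*(2*u)+1)) * (18*u+3) := by ring
    rw [h, Nat.mul_div_cancel_left _ (by positivity)]
  refine ⟨st13P u, ⟨?_, ?_, ?_⟩, ?_, ?_, ?_, ?_⟩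
  · intro i _ _; simp only [st13P]; split_ifs <;> omega
  · intro i j _ hij _; simp only [st13P]; split_ifs <;> omega
  · rw [st13_psum u (2*(2*u)+1) (by omega)]
    split_ifs <;> omega
  · intro i h1 h2; simp only [st13P]; split_ifs <;> omega
  · intro i h1 h2; simp only [st13P]; split_ifs <;> omega
  -- slack nonnegativity
  · intro j hj1 hj2
    unfold slack
    rw [hs, st13_psum u j (by omega)]
    by_cases h1 : j ≤ 3*u
    · rw [if_pos h1]
      have hg := st13_gauss (6*(2*u)+2) (2*j)
      have hju : (j:ℤ) ≤ 3*u := by exact_mod_cast h1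
      have hj0 : (0:ℤ) ≤ (j:ℤ) := by positivity
      push_cast at hg ⊢
      nlinarith [mul_nonneg hj0 (by linarith : (0:ℤ) ≤ 6*(u:ℤ) + 2 - 2*j)]
    · by_cases h2 : j ≤ 3*u+3
      · rw [if_neg h1, if_pos h2]
        have hc : 3*j - 3*u = 3*j - 3*u := rfl
        have hj3 : j = 3*u+1 ∨ j = 3*u+2 ∨ j = 3*u+3 := by omega
        have hu' : (5:ℤ) ≤ (u:ℤ) := by exact_mod_cast hu5
        rcases hj3 with h | h | h <;> subst h <;>
        · have hg := st13_gauss (6*(2*u)+2) (3*(3*u+1) - 3*u) <;> skip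
          all_goals first
          | (have hg1 := st13_gauss (6*(2*u)+2) (6*u+3)
             have hval : 3*(3*u+1) - 3*u = 6*u+3 := by omega
             rw [hval]; push_cast at hg1 ⊢; nlinarith [hg1])
          | (have hg1 := st13_gauss (6*(2*u)+2) (6*u+6)
             have hval : 3*(3*u+2) - 3*u = 6*u+6 := by omega
             rw [hval]; push_cast at hg1 ⊢; nlinarith [hg1])
          | (have hg1 := st13_gauss (6*(2*u)+2) (6*u+9)
             have hval : 3*(3*u+3) - 3*u = 6*u+9 := by omega
             rw [hval]; push_cast at hg1 ⊢; nlinarith [hg1])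
      · rw [if_neg h1, if_neg h2, if_pos (by omega : j ≤ 4*u)]
        have hg := st13_gauss (6*(2*u)+2) (6*j - (12*u+9))
        have hcast : ((6*j - (12*u+9) : ℕ) : ℤ) = 6*(j:ℤ) - (12*u+9) := by
          have : 12*u+9 ≤ 6*j := by omega
          push_cast [Nat.cast_sub this]
          ring
        rw [hcast] at hg
        have hju : (j:ℤ) ≤ 4*u := by exact_mod_cast (by omega : j ≤ 4*u)
        have hjl : 3*(u:ℤ)+4 ≤ (j:ℤ) := by exact_mod_cast (by omega : 3*u+4 ≤ j)
        have hu' : (5:ℤ) ≤ (u:ℤ) := by exact_mod_cast hu5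
        push_cast at hg ⊢
        nlinarith [mul_nonneg (by linarith : (0:ℤ) ≤ (j:ℤ) - 3*u - 4) (by linarith : (0:ℤ) ≤ 4*(u:ℤ) - j), hg]
  -- not equitable
  · rintro ⟨A, hdisj, hcover, hcard, hsumA⟩
    set B : Finset ℕ := Finset.Icc (6*u+1) (12*u+2) with hB
    have hAsub : ∀ i, 1 ≤ i → i ≤ 4*u+1 → A i ⊆ Finset.Icc 1 (6*(2*u)+2) := by
      intro i h1 h2
      rw [← hcover]
      exact Finset.subset_biUnion_of_mem A (Finset.mem_Icc.mpr ⟨h1, by omega⟩)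
    -- pairs lie in B
    have hpair : ∀ i, 1 ≤ i → i ≤ 3*u → A i ⊆ B := by
      intro i h1 h2
      have hc2 : (A i).card = 2 := by
        rw [hcard i h1 (by omega)]; simp only [st13P]; split_ifs <;> omega
      obtain ⟨x, y, hxy, hA⟩ := Finset.card_eq_two.mp hc2
      have hsxy : x + y = 18*u+3 := by
        have h := hsumA i h1 (by omega)
        rw [hA, Finset.sum_pair hxy, hs] at h
        exact h
      have hx : x ∈ Finset.Icc 1 (6*(2*u)+2) :=
        hAsub i h1 (by omega) (hA ▸ Finset.mem_insert_self x {y})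
      have hy : y ∈ Finset.Icc 1 (6*(2*u)+2) :=
        hAsub i h1 (by omega) (hA ▸ Finset.mem_insert_of_mem (Finset.mem_singleton_self y))
      rw [Finset.mem_Icc] at hx hy
      intro z hz
      rw [hA, Finset.mem_insert, Finset.mem_singleton] at hz
      rw [hB, Finset.mem_Icc]
      rcases hz with rfl | rfl <;> omega
    -- triples meet B
    have htriple : ∀ i, 3*u+1 ≤ i → i ≤ 3*u+3 → ∃ x ∈ A i, x ∈ B := by
      intro i h1 h2
      by_contra hcon
      push_neg at hcon
      have hc3 : (A i).card = 3 := by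
        rw [hcard i (by omega) (by omega)]; simp only [st13P]; split_ifs <;> omega
      have hsmall : ∀ x ∈ A i, x ≤ 6*u := by
        intro x hx
        have hx' := hAsub i (by omega) (by omega) hx
        rw [Finset.mem_Icc] at hx'
        have := hcon x hx
        rw [hB, Finset.mem_Icc] at this
        omega
      have hle : ∑ x ∈ A i, x ≤ (A i).card * (6*u) := by
        calc ∑ x ∈ A i, x ≤ ∑ _x ∈ A i, 6*u := Finset.sum_le_sum hsmall
        _ = (A i).card * (6*u) := by rw [Finset.sum_const, smul_eq_mul]
      have hsum3 := hsumA i (by omega) (by omega)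
      rw [hs] at hsum3
      rw [hc3] at hle
      omega
    -- counting
    have hdisj' : ∀ i ∈ Finset.Icc 1 (3*u+3), ∀ j ∈ Finset.Icc 1 (3*u+3), i ≠ j →
        Disjoint (A i ∩ B) (A j ∩ B) := by
      intro i hi j hj hij
      rw [Finset.mem_Icc] at hi hj
      rcases lt_or_gt_of_ne hij with h | h
      · exact (hdisj i j hi.1 h (by omega)).mono Finset.inter_subset_left Finset.inter_subset_left
      · exact ((hdisj j i hj.1 h (by omega)).symm).mono Finset.inter_subset_left Finset.inter_subset_left
    have hcardB : B.card = 6*u+2 := by rw [hB, Nat.card_Icc]; omega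
    have hup : ∑ i ∈ Finset.Icc 1 (3*u+3), (A i ∩ B).card ≤ 6*u+2 := by
      rw [← Finset.card_biUnion hdisj']
      calc ((Finset.Icc 1 (3*u+3)).biUnion fun i => A i ∩ B).card
          ≤ B.card := Finset.card_le_card (Finset.biUnion_subset.mpr fun i _ => Finset.inter_subset_right)
        _ = 6*u+2 := hcardB
    have hIoc : Finset.Icc 1 (3*u+3) = Finset.Ioc 0 (3*u+3) := by
      ext x; simp [Finset.mem_Icc, Finset.mem_Ioc]; omega
    have hsplit : (∑ i ∈ Finset.Ioc 0 (3*u), (A i ∩ B).card)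
        + (∑ i ∈ Finset.Ioc (3*u) (3*u+3), (A i ∩ B).card)
        = ∑ i ∈ Finset.Ioc 0 (3*u+3), (A i ∩ B).card :=
      Finset.sum_Ioc_consecutive _ (by omega) (by omega)
    have hlow1 : ∑ i ∈ Finset.Ioc 0 (3*u), (A i ∩ B).card = 6*u := by
      have : ∀ i ∈ Finset.Ioc 0 (3*u), (A i ∩ B).card = 2 := by
        intro i hi
        rw [Finset.mem_Ioc] at hi
        rw [Finset.inter_eq_left.mpr (hpair i hi.1 hi.2)]
        rw [hcard i hi.1 (by omega)]
        simp only [st13P]; split_ifs <;> omega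
      rw [Finset.sum_congr rfl this, Finset.sum_const, Nat.card_Ioc, smul_eq_mul]
      omega
    have hlow2 : 3 ≤ ∑ i ∈ Finset.Ioc (3*u) (3*u+3), (A i ∩ B).card := by
      have h1 : ∀ i ∈ Finset.Ioc (3*u) (3*u+3), 1 ≤ (A i ∩ B).card := by
        intro i hi
        rw [Finset.mem_Ioc] at hi
        obtain ⟨x, hx, hxB⟩ := htriple i (by omega) hi.2
        exact Finset.card_pos.mpr ⟨x, Finset.mem_inter.mpr ⟨hx, hxB⟩⟩
      calc 3 = (Finset.Ioc (3*u) (3*u+3)).card * 1 := by rw [Nat.card_Ioc]; omega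
        _ ≤ ∑ i ∈ Finset.Ioc (3*u) (3*u+3), (A i ∩ B).card := by
            rw [← smul_eq_mul]
            exact Finset.card_nsmul_le_sum _ _ _ h1
    rw [hIoc, ← hsplit] at hup
    omega
end

section
/- For every odd integer t ≥ 11, with n = 6t + 2, k = 2t + 1, e = (3t + 1)/2 and f = 2, there exists an ascending partition P = [p_1, …, p_k] of n of size k with p_1 = ⋯ = p_e = 2 and p_{e+1} = ⋯ = p_{e+f} = 3, such that slack_j(P) ≥ 0 for all 1 ≤ j ≤ k − 1 and P is not equitable. -/
/-- The explicit partition: `e` parts equal to `2`, two parts equal to `3`,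
then parts equal to `6`, and a final part `10`. -/
def pfun (t e : ℕ) (i : ℕ) : ℕ :=
  if i ≤ e then 2 else if i ≤ e + 2 then 3 else if i ≤ 2 * t then 6 else 10

lemma gauss (n : ℕ) : ∀ m : ℕ,
    2 * ∑ i ∈ Finset.Icc 1 m, ((n : ℤ) - (i : ℤ) + 1) = m * (2 * n + 1 - m) := by
  intro m
  induction m with
  | zero => simp
  | succ m ih =>
    rw [Finset.sum_Icc_succ_top (by omega : 1 ≤ m + 1)]
    push_cast
    push_cast at ih
    linear_combination ih

lemma sum_pfun (t e : ℕ) (he : 2 * e = 3 * t + 1) (ht : 11 ≤ t) : ∀ j, j ≤ 2 * t + 1 →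
    ∑ i ∈ Finset.Icc 1 j, pfun t e i =
      (if j ≤ e then 2 * j else if j ≤ e + 2 then 3 * j - e
        else if j ≤ 2 * t then 6 * j - (4 * e + 6) else 6 * t + 2) := by
  intro j
  induction j with
  | zero => simp
  | succ m ih =>
    intro h
    rw [Finset.sum_Icc_succ_top (by omega : 1 ≤ m + 1), ih (by omega)]
    simp only [pfun]
    split_ifs <;> omega

theorem statement14 (t : ℕ) (ht : Odd t) (ht11 : 11 ≤ t) (e : ℕ) (he : 2 * e = 3 * t + 1) :
    ∃ p : ℕ → ℕ,
      IsAscPartition (6 * t + 2) (2 * t + 1) p ∧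
      (∀ i, 1 ≤ i → i ≤ e → p i = 2) ∧
      (∀ i, e + 1 ≤ i → i ≤ e + 2 → p i = 3) ∧
      (∀ j, 1 ≤ j → j ≤ 2 * t → 0 ≤ slack (6 * t + 2) (2 * t + 1) p j) ∧
      ¬ Equitable (6 * t + 2) (2 * t + 1) p := by
  obtain ⟨u, hu⟩ : ∃ u, t = 2 * u + 1 := by obtain ⟨u, hu⟩ := ht; exact ⟨u, by omega⟩
  subst hu
  have heu : e = 3 * u + 2 := by omega
  subst heu
  have hu5 : 5 ≤ u := by omega
  have hs : sNK (6 * (2 * u + 1) + 2) (2 * (2 * u + 1) + 1) = 18 * u + 12 := by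
    unfold sNK
    have h1 : (6 * (2 * u + 1) + 2) * (6 * (2 * u + 1) + 2 + 1)
        = (2 * (2 * (2 * u + 1) + 1)) * (18 * u + 12) := by ring
    rw [h1, Nat.mul_div_cancel_left _ (by omega)]
  have hSum := sum_pfun (2 * u + 1) (3 * u + 2) (by ring) (by omega)
  refine ⟨pfun (2 * u + 1) (3 * u + 2), ⟨?_, ?_, ?_⟩, ?_, ?_, ?_, ?_⟩
  · intro i _ _; simp only [pfun]; split_ifs <;> omega
  · intro i j _ hij _; simp only [pfun]; split_ifs <;> omega
  · rw [hSum (2 * (2 * u + 1) + 1) le_rfl]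
    split_ifs <;> omega
  · intro i _ hi; simp only [pfun]; split_ifs <;> omega
  · intro i hi1 hi2; simp only [pfun]; split_ifs <;> omega
  · -- slack nonnegativity
    intro j hj1 hj2
    unfold slack
    rw [hs, hSum j (by omega)]
    have hg := gauss (6 * (2 * u + 1) + 2)
    rcases le_or_gt j (3 * u + 2) with hc1 | hc1
    · rw [if_pos hc1]
      have hg1 := hg (2 * j)
      push_cast at hg1 ⊢
      have hjz : (1 : ℤ) ≤ (j : ℤ) := by exact_mod_cast hj1
      have hjz2 : (j : ℤ) ≤ 3 * u + 2 := by exact_mod_cast hc1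
      nlinarith [hg1, mul_nonneg (by linarith : (0:ℤ) ≤ (j:ℤ))
        (by linarith : (0:ℤ) ≤ 3 * (u:ℤ) + 2 - (j:ℤ))]
    · rcases le_or_gt j (3 * u + 4) with hc2 | hc2
      · rw [if_neg (by omega), if_pos (by omega)]
        rcases (by omega : j = 3 * u + 3 ∨ j = 3 * u + 4) with rfl | rfl
        · have hm : 3 * (3 * u + 3) - (3 * u + 2) = 6 * u + 7 := by omega
          rw [hm]
          have hg1 := hg (6 * u + 7)
          push_cast at hg1 ⊢
          nlinarith [hg1]
        · have hm : 3 * (3 * u + 4) - (3 * u + 2) = 6 * u + 10 := by omega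
          rw [hm]
          have hg1 := hg (6 * u + 10)
          push_cast at hg1 ⊢
          nlinarith [hg1]
      · rw [if_neg (by omega), if_neg (by omega), if_pos (by omega)]
        have hm : 6 * j - (4 * (3 * u + 2) + 6) = 6 * j - 12 * u - 14 := by omega
        rw [hm]
        have hg1 := hg (6 * j - 12 * u - 14)
        have hjz : ((6 * j - 12 * u - 14 : ℕ) : ℤ) = 6 * (j : ℤ) - 12 * u - 14 := by omega
        rw [hjz] at hg1
        have hjz1 : (3 * (u:ℤ) + 5) ≤ (j : ℤ) := by
          have : 3 * u + 5 ≤ j := by omega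
          exact_mod_cast this
        have hjz2 : (j : ℤ) ≤ 4 * (u:ℤ) + 2 := by
          have : j ≤ 4 * u + 2 := by omega
          exact_mod_cast this
        push_cast at hg1 ⊢
        nlinarith [hg1, mul_nonneg (by linarith : (0:ℤ) ≤ (j:ℤ) - 3 * u - 4)
          (by linarith : (0:ℤ) ≤ 4 * (u:ℤ) + 2 - (j:ℤ)),
          mul_nonneg (by linarith : (0:ℤ) ≤ (j:ℤ) - 3 * u - 5)
          (by linarith : (0:ℤ) ≤ 4 * (u:ℤ) + 2 - (j:ℤ))]
  · -- not equitable
    rintro ⟨A, hdisj, hcover, hcard, hsum⟩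
    set n := 6 * (2 * u + 1) + 2 with hn
    set k := 2 * (2 * u + 1) + 1 with hk
    have hnval : n = 12 * u + 8 := by omega
    have hkval : k = 4 * u + 3 := by omega
    have hsub : ∀ i, 1 ≤ i → i ≤ k → A i ⊆ Finset.Icc 1 n := by
      intro i h1 h2
      rw [← hcover]
      exact Finset.subset_biUnion_of_mem A (Finset.mem_Icc.2 ⟨h1, h2⟩)
    have hsum' : ∀ i, 1 ≤ i → i ≤ k → ∑ x ∈ A i, x = 18 * u + 12 := by
      intro i h1 h2; rw [hsum i h1 h2, hs]
    have hcard' : ∀ i, 1 ≤ i → i ≤ 3 * u + 2 → (A i).card = 2 := by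
      intro i h1 h2
      rw [hcard i h1 (by omega)]
      simp only [pfun]; split_ifs <;> omega
    have hcard3 : ∀ i, 3 * u + 3 ≤ i → i ≤ 3 * u + 4 → (A i).card = 3 := by
      intro i h1 h2
      rw [hcard i (by omega) (by omega)]
      simp only [pfun]; split_ifs <;> omega
    -- every set among the first 3u+4 has an element ≥ 6u+4
    have hbig : ∀ i, 1 ≤ i → i ≤ 3 * u + 4 → ∃ x ∈ A i, 6 * u + 4 ≤ x := by
      intro i h1 h2
      by_contra hcon
      push_neg at hcon
      have hb : ∑ x ∈ A i, x ≤ (A i).card • (6 * u + 3) :=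
        Finset.sum_le_card_nsmul (A i) (fun x => x) (6 * u + 3) (fun x hx => by
          show x ≤ 6 * u + 3
          have := hcon x hx; omega)
      have hc : (A i).card ≤ 3 := by
        rcases le_or_gt i (3 * u + 2) with h | h
        · rw [hcard' i h1 h]; omega
        · rw [hcard3 i (by omega) h2]
      rw [hsum' i h1 (by omega)] at hb
      simp only [smul_eq_mul] at hb
      nlinarith
    -- every pair set is contained in [6u+4, 12u+8]
    have hpair : ∀ i, 1 ≤ i → i ≤ 3 * u + 2 → A i ⊆ Finset.Icc (6 * u + 4) (12 * u + 8) := by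
      intro i h1 h2 x hx
      have hxn : x ∈ Finset.Icc 1 n := hsub i h1 (by omega) hx
      rw [Finset.mem_Icc] at hxn
      have hse : ∑ y ∈ (A i).erase x, y + x = 18 * u + 12 := by
        rw [Finset.sum_erase_add (A i) _ hx]
        exact hsum' i h1 (by omega)
      have hce : ((A i).erase x).card = 1 := by
        rw [Finset.card_erase_of_mem hx, hcard' i h1 h2]
      have hb : ∑ y ∈ (A i).erase x, y ≤ ((A i).erase x).card • (12 * u + 8) :=
        Finset.sum_le_card_nsmul _ (fun y => y) _ (fun y hy => by
          show y ≤ 12 * u + 8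
          have hyA : y ∈ A i := Finset.mem_of_mem_erase hy
          have := hsub i h1 (by omega) hyA
          rw [Finset.mem_Icc] at this; omega)
      rw [hce] at hb
      simp only [smul_eq_mul, one_mul] at hb
      rw [Finset.mem_Icc]
      omega
    -- counting
    set B := Finset.Icc (6 * u + 4) (12 * u + 8) with hB
    have hdisj' : ∀ i ∈ Finset.Icc 1 (3 * u + 4), ∀ j ∈ Finset.Icc 1 (3 * u + 4),
        i ≠ j → Disjoint (A i ∩ B) (A j ∩ B) := by
      intro i hi j hj hij
      rw [Finset.mem_Icc] at hi hj
      have : Disjoint (A i) (A j) := by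
        rcases lt_or_gt_of_ne hij with h | h
        · exact hdisj i j hi.1 h (by omega)
        · exact (hdisj j i hj.1 h (by omega)).symm
      exact this.mono Finset.inter_subset_left Finset.inter_subset_left
    have hcardT : ((Finset.Icc 1 (3 * u + 4)).biUnion (fun i => A i ∩ B)).card
        = ∑ i ∈ Finset.Icc 1 (3 * u + 4), (A i ∩ B).card := Finset.card_biUnion hdisj'
    have hTsub : (Finset.Icc 1 (3 * u + 4)).biUnion (fun i => A i ∩ B) ⊆ B :=
      Finset.biUnion_subset.2 (fun i _ => Finset.inter_subset_right)
    have hTB : ((Finset.Icc 1 (3 * u + 4)).biUnion (fun i => A i ∩ B)).card ≤ B.card :=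
      Finset.card_le_card hTsub
    have hBcard : B.card = 6 * u + 5 := by rw [hB, Nat.card_Icc]; omega
    have hsplit : ∑ i ∈ Finset.Icc 1 (3 * u + 4), (A i ∩ B).card
        = ∑ i ∈ Finset.Icc 1 (3 * u + 2), (A i ∩ B).card
          + (A (3 * u + 3) ∩ B).card + (A (3 * u + 4) ∩ B).card := by
      rw [show 3 * u + 4 = (3 * u + 3) + 1 from rfl,
        Finset.sum_Icc_succ_top (by omega : 1 ≤ 3 * u + 3 + 1),
        show 3 * u + 3 = (3 * u + 2) + 1 from rfl,
        Finset.sum_Icc_succ_top (by omega : 1 ≤ 3 * u + 2 + 1)]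
    have hlow1 : ∑ i ∈ Finset.Icc 1 (3 * u + 2), (A i ∩ B).card = 2 * (3 * u + 2) := by
      have hval : ∀ i ∈ Finset.Icc 1 (3 * u + 2), (A i ∩ B).card = 2 := by
        intro i hi
        rw [Finset.mem_Icc] at hi
        rw [Finset.inter_eq_left.2 (hpair i hi.1 hi.2), hcard' i hi.1 hi.2]
      calc ∑ i ∈ Finset.Icc 1 (3 * u + 2), (A i ∩ B).card
          = ∑ _i ∈ Finset.Icc 1 (3 * u + 2), 2 := Finset.sum_congr rfl hval
        _ = 2 * (3 * u + 2) := by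
            rw [Finset.sum_const, Nat.card_Icc, smul_eq_mul]; omega
    have hlow2 : ∀ i, 3 * u + 3 ≤ i → i ≤ 3 * u + 4 → 1 ≤ (A i ∩ B).card := by
      intro i h1 h2
      obtain ⟨x, hxA, hxb⟩ := hbig i (by omega) h2
      have hxn : x ∈ Finset.Icc 1 n := hsub i (by omega) (by omega) hxA
      rw [Finset.mem_Icc] at hxn
      have : x ∈ A i ∩ B := by
        rw [Finset.mem_inter, hB, Finset.mem_Icc]
        exact ⟨hxA, hxb, by omega⟩
      exact Finset.card_pos.2 ⟨x, this⟩
    have h2 := hlow2 (3 * u + 3) le_rfl (by omega)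
    have h3 := hlow2 (3 * u + 4) (by omega) le_rfl
    omega
end
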